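/- Let S be a graded polynomial ring k[x_1,...,x_n] with deg x_i ≥ 1 and a Poisson bracket preserving the grading, and suppose the first Poisson cohomology H^1_Poiss(S) vanishes. If I = (f) is a graded principal Poisson ideal with homogeneous generator f ≠ 0, then f is a Casimir: {x_i, f} = 0 for all i. -/

import Mathlib

open MvPolynomial

/-- The Poisson bracket on a polynomial ring extending `Λ i j = {x_i, x_j}` as a
biderivation. -/
noncomputable def pb {k : Type*} [CommSemiring k] {σ : Type*} [Fintype σ] [DecidableEq σ]
    (Λ : σ → σ → MvPolynomial σ k) (f g : MvPolynomial σ k) : MvPolynomial σ k :=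
  ∑ i, ∑ j, Λ i j * pderiv i f * pderiv j g

section Aux

variable {k : Type*} [CommRing k] {σ : Type*} [Fintype σ] [DecidableEq σ]
  (Λ : σ → σ → MvPolynomial σ k)

lemma pb_X_left (a : σ) (g : MvPolynomial σ k) :
    pb Λ (X a) g = ∑ j, Λ a j * pderiv j g := by
  unfold pb
  rw [Finset.sum_eq_single a]
  · simp
  · intro i _ hi
    simp [Pi.single_eq_of_ne (Ne.symm hi)]
  · simp

lemma pb_X_X (a b : σ) : pb Λ (X a) (X b) = Λ a b := by
  rw [pb_X_left, Finset.sum_eq_single b]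
  · simp
  · intro j _ hj
    simp [Pi.single_eq_of_ne (Ne.symm hj)]
  · simp

lemma pb_expand_left (g h : MvPolynomial σ k) :
    pb Λ g h = ∑ i, pderiv i g * pb Λ (X i) h := by
  simp_rw [pb_X_left, Finset.mul_sum]
  unfold pb
  refine Finset.sum_congr rfl fun i _ => Finset.sum_congr rfl fun j _ => ?_
  ring

lemma pb_antisymm (hanti : ∀ i j, Λ i j = - Λ j i) (g h : MvPolynomial σ k) :
    pb Λ g h = - pb Λ h g := by
  unfold pb
  rw [Finset.sum_comm, ← Finset.sum_neg_distrib]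
  refine Finset.sum_congr rfl fun j _ => ?_
  rw [← Finset.sum_neg_distrib]
  refine Finset.sum_congr rfl fun i _ => ?_
  rw [hanti i j]; ring

lemma pb_right_mul (g a b : MvPolynomial σ k) :
    pb Λ g (a * b) = pb Λ g a * b + a * pb Λ g b := by
  unfold pb
  rw [Finset.sum_mul, Finset.mul_sum, ← Finset.sum_add_distrib]
  refine Finset.sum_congr rfl fun i _ => ?_
  rw [Finset.sum_mul, Finset.mul_sum, ← Finset.sum_add_distrib]
  refine Finset.sum_congr rfl fun j _ => ?_
  rw [pderiv_mul]; ring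

lemma pb_right_add (g a b : MvPolynomial σ k) :
    pb Λ g (a + b) = pb Λ g a + pb Λ g b := by
  simp [pb, map_add, mul_add, Finset.sum_add_distrib]

lemma pb_right_neg (g a : MvPolynomial σ k) :
    pb Λ g (-a) = - pb Λ g a := by
  simp [pb, map_neg, mul_neg, Finset.sum_neg_distrib]

lemma pb_right_sum {ι : Type*} (g : MvPolynomial σ k) (s : Finset ι)
    (h : ι → MvPolynomial σ k) :
    pb Λ g (∑ x ∈ s, h x) = ∑ x ∈ s, pb Λ g (h x) := by
  classical
  induction s using Finset.induction_on with
  | empty => simp [pb]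
  | insert _ _ hx ih => rw [Finset.sum_insert hx, pb_right_add, ih, Finset.sum_insert hx]

lemma pb_right_C (g : MvPolynomial σ k) (c : k) : pb Λ g (C c) = 0 := by
  simp [pb, pderiv_C]

lemma pderiv_isWeightedHomogeneous {w : σ → ℤ} {φ : MvPolynomial σ k} {m : ℤ}
    (hφ : IsWeightedHomogeneous w φ m) (i : σ) :
    IsWeightedHomogeneous w (pderiv i φ) (m - w i) := by
  have hrw : pderiv i φ
      = ∑ s ∈ φ.support, monomial (s - Finsupp.single i 1) (coeff s φ * (s i : k)) := by
    conv_lhs => rw [φ.as_sum]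
    rw [map_sum]
    simp_rw [pderiv_monomial]
  rw [hrw]
  apply IsWeightedHomogeneous.sum
  intro s hs
  by_cases h : s i = 0
  · rw [h]
    simp only [Nat.cast_zero, mul_zero, monomial_zero]
    exact isWeightedHomogeneous_zero _ _ _
  · apply isWeightedHomogeneous_monomial
    have hws : Finsupp.weight w s = m := hφ (mem_support_iff.mp hs)
    have hle : Finsupp.single i 1 ≤ s := by
      rw [Finsupp.single_le_iff]; omega
    have hadd : (s - Finsupp.single i 1) + Finsupp.single i 1 = s := tsub_add_cancel_of_le hle
    have h2 := congrArg (Finsupp.weight w) hadd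
    rw [map_add] at h2
    have hsingle : Finsupp.weight w (Finsupp.single i 1) = w i := by
      rw [Finsupp.weight_apply, Finsupp.sum_single_index] <;> simp
    rw [hsingle, hws] at h2
    omega

lemma weight_pos {w : σ → ℤ} (hw : ∀ i, 1 ≤ w i) {d : σ →₀ ℕ} (hd : d ≠ 0) :
    0 < Finsupp.weight w d := by
  rw [Finsupp.weight_apply, Finsupp.sum]
  apply Finset.sum_pos
  · intro i hi
    have h1 : 1 ≤ d i := Nat.one_le_iff_ne_zero.mpr (Finsupp.mem_support_iff.mp hi)
    have h2 := hw i
    rw [nsmul_eq_mul]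
    nlinarith [Int.ofNat_le.mpr h1]
  · exact Finsupp.support_nonempty_iff.mpr hd

lemma whc_zero {w : σ → ℤ} (hw : ∀ i, 1 ≤ w i) (a : MvPolynomial σ k) :
    weightedHomogeneousComponent w 0 a = C (coeff 0 a) := by
  ext dd
  rw [coeff_weightedHomogeneousComponent]
  by_cases hdd : dd = 0
  · subst hdd
    simp
  · rw [if_neg (weight_pos hw hdd).ne', coeff_C, if_neg (Ne.symm hdd)]

end Aux

/-- let `S = k[x_1,…,x_n]` be graded with `deg x_i ≥ 1` and a Poisson
bracket of degree `p` (so `Λ_{ij}` is weighted homogeneous of degree `p + deg x_i + deg x_j`).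
Assume the first Poisson cohomology vanishes: every Poisson 1-cocycle
`W = ∑ W_i ∂/∂x_i` (i.e. `{x_i,W_j} - {x_j,W_i} - ∑_ℓ W_ℓ ∂Λ_{ij}/∂x_ℓ = 0`) is a
coboundary (`W_i = {x_i, a}` for some `a`).  If `(f)` is a graded principal Poisson ideal
with homogeneous generator `f ≠ 0`, then `f` is a Casimir: `{x_i, f} = 0` for all `i`. -/
theorem principal_poisson_ideal_generator_casimir
    (k : Type*) [Field k] [CharZero k] (n : ℕ)
    (Λ : Fin n → Fin n → MvPolynomial (Fin n) k)
    (hanti : ∀ i j, Λ i j = - Λ j i)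
    (hjac : ∀ f g h : MvPolynomial (Fin n) k,
        pb Λ f (pb Λ g h) + pb Λ g (pb Λ h f) + pb Λ h (pb Λ f g) = 0)
    (w : Fin n → ℤ) (hw : ∀ i, 1 ≤ w i) (p : ℤ)
    (hΛdeg : ∀ i j, IsWeightedHomogeneous w (Λ i j) (p + w i + w j))
    (hH1 : ∀ W : Fin n → MvPolynomial (Fin n) k,
        (∀ i j, pb Λ (X i) (W j) - pb Λ (X j) (W i)
            - ∑ l, W l * pderiv l (Λ i j) = 0) →
        ∃ a : MvPolynomial (Fin n) k, ∀ i, W i = pb Λ (X i) a)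
    (f : MvPolynomial (Fin n) k) (hf : f ≠ 0)
    (d : ℤ) (hfhom : IsWeightedHomogeneous w f d)
    (hPoisson : ∀ g : MvPolynomial (Fin n) k,
        ∀ h ∈ Ideal.span {f}, pb Λ g h ∈ Ideal.span {f}) :
    ∀ i, pb Λ (X i) f = 0 := by
  classical
  -- extract Z with {x_i, f} = Z i * f
  have hmem : ∀ i, pb Λ (X i) f ∈ Ideal.span {f} := fun i =>
    hPoisson (X i) f (Ideal.mem_span_singleton_self f)
  choose Z hZ using fun i => Ideal.mem_span_singleton'.mp (hmem i)
  -- homogeneity of {x_i, g}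
  have pbX_hom : ∀ (i : Fin n) (g : MvPolynomial (Fin n) k) (m : ℤ),
      IsWeightedHomogeneous w g m →
      IsWeightedHomogeneous w (pb Λ (X i) g) (p + w i + m) := by
    intro i g m hg
    rw [pb_X_left]
    apply IsWeightedHomogeneous.sum
    intro j _
    have := (hΛdeg i j).mul (pderiv_isWeightedHomogeneous hg j)
    rwa [show p + w i + w j + (m - w j) = p + w i + m by ring] at this
  -- cocycle condition
  have hcoc : ∀ i j, pb Λ (X i) (Z j) - pb Λ (X j) (Z i)
      - ∑ l, Z l * pderiv l (Λ i j) = 0 := by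
    intro i j
    have h0 := hjac (X i) (X j) f
    rw [← hZ j, pb_right_mul Λ (X i) (Z j) f,
      pb_antisymm Λ hanti f (X i), ← hZ i, pb_right_neg Λ (X j) (Z i * f),
      pb_right_mul Λ (X j) (Z i) f, ← hZ j,
      pb_X_X Λ i j, pb_antisymm Λ hanti f (Λ i j), pb_expand_left Λ (Λ i j) f] at h0
    simp_rw [← hZ] at h0
    have key : (pb Λ (X i) (Z j) - pb Λ (X j) (Z i)
        - ∑ l, Z l * pderiv l (Λ i j)) * f = 0 := by
      rw [sub_mul, sub_mul, Finset.sum_mul]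
      have hterm : ∀ l, Z l * pderiv l (Λ i j) * f = pderiv l (Λ i j) * (Z l * f) :=
        fun l => by ring
      simp_rw [hterm]
      linear_combination h0
    rcases mul_eq_zero.mp key with h | h
    · exact h
    · exact absurd h hf
  obtain ⟨a, ha⟩ := hH1 Z hcoc
  -- decompose a into weighted homogeneous components
  intro i
  have hfin := weightedHomogeneousComponent_finsupp (w := w) a
  have hadecomp : a = ∑ m ∈ hfin.toFinset, weightedHomogeneousComponent w m a := by
    rw [← finsum_eq_sum _ hfin, sum_weightedHomogeneousComponent]
  have heq : pb Λ (X i) f = ∑ m ∈ hfin.toFinset,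
      pb Λ (X i) (weightedHomogeneousComponent w m a) * f := by
    rw [← hZ i, ha i]
    conv_lhs => rw [hadecomp]
    rw [pb_right_sum, Finset.sum_mul]
  have happly := congrArg (weightedHomogeneousComponent w (p + w i + d)) heq
  rw [map_sum] at happly
  rw [IsWeightedHomogeneous.weightedHomogeneousComponent_same
    (pbX_hom i f d hfhom)] at happly
  rw [happly]
  apply Finset.sum_eq_zero
  intro m _
  by_cases hm : m = 0
  · subst hm
    rw [whc_zero hw, pb_right_C, zero_mul, map_zero]
  · have hhom : IsWeightedHomogeneous w
        (pb Λ (X i) (weightedHomogeneousComponent w m a) * f) (p + w i + m + d) :=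
      (pbX_hom i _ m (weightedHomogeneousComponent_isWeightedHomogeneous m a)).mul hfhom
    exact hhom.weightedHomogeneousComponent_ne _ (by omega)
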